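/- If S is a common independent set of two matroids that is not of maximum size, then there exist elements and exchanges forming an augmenting sequence; concretely, there exists a sequence s, v1, v2, ..., v_{ℓ−1}, t in the exchange graph G(S) forming an (s,t)-path of length at most 2|S|/(r−|S|) + 2, where r is the maximum size of a common independent set. -/

import Mathlib

open Set

variable {α : Type*}

/-- Vertices of the exchange graph: `Sum.inl v` is an element of the ground set,
`Sum.inr false` is the source `s`, `Sum.inr true` is the sink `t`. -/
abbrev ExV (α : Type*) := α ⊕ Bool

/-- Adjacency in the exchange graph `G(S)` of the common independent set `S`. -/
def exAdj (M₁ M₂ : Matroid α) (S : Set α) : ExV α → ExV α → Prop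
  | Sum.inl u, Sum.inl v =>
      (u ∈ S ∧ v ∉ S ∧ M₁.Indep (insert v (S \ {u}))) ∨
      (u ∉ S ∧ v ∈ S ∧ M₂.Indep (insert u (S \ {v})))
  | Sum.inr false, Sum.inl v => v ∉ S ∧ M₁.Indep (insert v S)
  | Sum.inl v, Sum.inr true => v ∉ S ∧ M₂.Indep (insert v S)
  | _, _ => False

/-- `l` is an `(s,t)`-path (list of vertices) in the exchange graph `G(S)`.
Its length (number of edges) is `l.length - 1`. -/
def IsSTPath (M₁ M₂ : Matroid α) (S : Set α) (l : List (ExV α)) : Prop :=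
  l.Chain' (exAdj M₁ M₂ S) ∧ l.head? = some (Sum.inr false) ∧
    l.getLast? = some (Sum.inr true)

/-- `l` is a path from `s` to the element `v` in the exchange graph `G(S)`. -/
def IsSPathTo (M₁ M₂ : Matroid α) (S : Set α) (v : α) (l : List (ExV α)) : Prop :=
  l.Chain' (exAdj M₁ M₂ S) ∧ l.head? = some (Sum.inr false) ∧
    l.getLast? = some (Sum.inl v)

/-- `v` is at distance exactly `i` from `s` in the exchange graph `G(S)`;
i.e. `v ∈ D_i`. -/
def InLayer (M₁ M₂ : Matroid α) (S : Set α) (i : ℕ) (v : α) : Prop :=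
  (∃ l, IsSPathTo M₁ M₂ S v l ∧ l.length = i + 1) ∧
    ∀ l, IsSPathTo M₁ M₂ S v l → i + 1 ≤ l.length

/-- Shortest `(s,t)`-paths in `G(S)` have length exactly `4`. -/
def ShortestAugLenFour (M₁ M₂ : Matroid α) (S : Set α) : Prop :=
  (∃ l, IsSTPath M₁ M₂ S l ∧ l.length = 5) ∧
    ∀ l, IsSTPath M₁ M₂ S l → 5 ≤ l.length

/-- `(B₁, A₁, B₂)` is an augmenting set in `G(S)`. -/
def IsAugSet (M₁ M₂ : Matroid α) (S B₁ A₁ B₂ : Set α) : Prop :=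
  (∀ v ∈ B₁, InLayer M₁ M₂ S 1 v) ∧ (∀ v ∈ A₁, InLayer M₁ M₂ S 2 v) ∧
  (∀ v ∈ B₂, InLayer M₁ M₂ S 3 v) ∧
  B₁.ncard = A₁.ncard ∧ A₁.ncard = B₂.ncard ∧
  M₁.Indep (S ∪ B₁) ∧ M₂.Indep ((S ∪ B₁) \ A₁) ∧
  M₁.Indep ((S \ A₁) ∪ B₂) ∧ M₂.Indep (S ∪ B₂)

section Aux

lemma exch_aux {M : Matroid α} {B A : Set α} {y : α}
    (hB : M.Indep B) (hBfin : B.Finite) (hA : A ⊆ B) (hAne : A.Nonempty)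
    (hyE : y ∈ M.E) (hyB : y ∉ B) (hy : M.Indep (insert y (B \ A))) :
    ∃ u ∈ A, M.Indep (insert y (B \ {u})) := by
  have hground : insert y B ⊆ M.E := insert_subset hyE hB.subset_ground
  obtain ⟨X, hX, hsub⟩ := hy.subset_isBasis_of_subset
    (insert_subset_insert diff_subset) hground
  have hXfin : X.Finite := (hBfin.insert y).subset hX.subset
  have hcard : B.encard ≤ X.encard := by
    by_contra hlt
    push_neg at hlt
    obtain ⟨z, hz, hzi⟩ := hX.indep.augment hB hlt
    exact hz.2 (hX.mem_of_insert_indep (mem_insert_of_mem _ hz.1) hzi)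
  have hyX : y ∈ X := hsub (mem_insert _ _)
  rcases (B \ X).eq_empty_or_nonempty with hBX | ⟨u, hu⟩
  · obtain ⟨u, hu⟩ := hAne
    refine ⟨u, hu, hX.indep.subset ?_⟩
    refine insert_subset hyX (fun z hz => ?_)
    by_contra hzX
    have : z ∈ B \ X := ⟨hz.1, hzX⟩
    rw [hBX] at this
    exact this
  · have huA : u ∈ A := by
      by_contra huA
      exact hu.2 (hsub (mem_insert_of_mem _ ⟨hu.1, huA⟩))
    refine ⟨u, huA, hX.indep.subset ?_⟩
    refine insert_subset hyX (fun z hz => ?_)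
    by_contra hzX
    have hne : u ≠ z := fun h => hz.2 (by simp [h])
    have hXsub : X ⊆ insert y (B \ {u, z}) := by
      intro w hw
      rcases hX.subset hw with hw' | hw'
      · exact Or.inl hw'
      · refine Or.inr ⟨hw', ?_⟩
        rintro (rfl | rfl)
        · exact hu.2 hw
        · exact hzX hw
    have h1 : X.encard ≤ (B \ {u, z}).encard + 1 := by
      calc X.encard ≤ (insert y (B \ {u, z})).encard := encard_mono hXsub
        _ ≤ (B \ {u, z}).encard + 1 := encard_insert_le _ _
    have h2 : (B \ {u, z}).encard + (B ∩ {u, z}).encard = B.encard :=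
      encard_diff_add_encard_inter B {u, z}
    have h3 : B ∩ {u, z} = {u, z} := by
      rw [inter_eq_right]
      exact insert_subset hu.1 (by simpa using hz.1)
    have h4 : ({u, z} : Set α).encard = 2 := encard_pair hne
    have hfin : (B \ {u, z}).encard < ⊤ := (hBfin.diff).encard_lt_top
    rw [h3, h4] at h2
    have : B.encard ≤ (B \ {u, z}).encard + 1 := le_trans hcard h1
    rw [← h2] at this
    have h5 : (2 : ℕ∞) ≤ 1 := by
      have := (WithTop.add_le_add_iff_left hfin.ne).mp this
      exact this
    norm_num at h5

lemma matching_aux {M : Matroid α} {B T : Set α}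
    (hB : M.Indep B) (hT : M.Indep T) (hBfin : B.Finite) (hTfin : T.Finite)
    (hcard : B.encard = T.encard) :
    ∃ σ : α → α, Set.MapsTo σ (B \ T) (T \ B) ∧ Set.InjOn σ (B \ T) ∧
      ∀ u ∈ B \ T, M.Indep (insert (σ u) (B \ {u})) := by
  classical
  set TB : Finset α := (hTfin.diff : (T \ B).Finite).toFinset with hTB
  set t : (B \ T : Set α) → Finset α :=
    fun u => TB.filter (fun y => M.Indep (insert y (B \ {u.1}))) with ht
  have hall : ∀ s : Finset (B \ T : Set α), s.card ≤ (s.biUnion t).card := by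
    intro s
    rcases s.eq_empty_or_nonempty with rfl | hsne
    · simp
    by_contra hlt
    push_neg at hlt
    set A : Finset α := s.image Subtype.val with hA
    have hAcard : A.card = s.card := Finset.card_image_of_injective s Subtype.val_injective
    have hAsub : (A : Set α) ⊆ B \ T := by
      intro x hx
      simp only [hA, Finset.coe_image, mem_image] at hx
      obtain ⟨⟨u, hu⟩, _, rfl⟩ := hx
      exact hu
    set N : Finset α := s.biUnion t with hN
    have hNsub : (N : Set α) ⊆ T \ B := by
      intro x hx
      simp only [hN, Finset.coe_biUnion, mem_iUnion] at hx
      obtain ⟨u, hu, hx⟩ := hx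
      simp only [ht, Finset.mem_coe, Finset.mem_filter, hTB, Set.Finite.mem_toFinset] at hx
      exact hx.1
    set Z : Set α := (B \ A) ∪ N with hZ
    have hZE : Z ⊆ M.E := union_subset (diff_subset.trans hB.subset_ground)
      (fun x hx => hT.subset_ground (hNsub hx).1)
    have hBA : M.Indep (B \ A) := hB.subset diff_subset
    obtain ⟨W, hW, hWsub⟩ := hBA.subset_isBasis_of_subset subset_union_left hZE
    have hZfin : Z.Finite := (hBfin.diff).union (N.finite_toSet)
    have hWfin : W.Finite := hZfin.subset hW.subset
    have hWlt : W.encard < T.encard := by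
      have h1 : W.encard ≤ (B \ A).encard + N.card := by
        calc W.encard ≤ Z.encard := encard_mono hW.subset
          _ ≤ (B \ A).encard + (N : Set α).encard := encard_union_le _ _
          _ = (B \ A).encard + N.card := by rw [(Set.encard_coe_eq_coe_finsetCard N)]
      have h2 : (B \ A).encard + A.card = B.encard := by
        have : (B \ A).encard + ((A : Set α)).encard = B.encard := by
          rw [← encard_diff_add_encard_of_subset (fun x hx => (hAsub hx).1)]
        rwa [(Set.encard_coe_eq_coe_finsetCard A)] at this
      have hNA : (N.card : ℕ∞) < A.card := by
        rw [hAcard]; exact_mod_cast hlt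
      calc W.encard ≤ (B \ A).encard + N.card := h1
        _ < (B \ A).encard + A.card := by
            exact WithTop.add_lt_add_left ((hBfin.diff).encard_lt_top).ne hNA
        _ = B.encard := h2
        _ = T.encard := hcard
    obtain ⟨y, hy, hyi⟩ := hW.indep.augment hT hWlt
    have hyZ : y ∉ Z := fun hyZ => hy.2 (hW.mem_of_insert_indep hyZ hyi)
    have hyB : y ∉ B := by
      intro hyB
      rcases em (y ∈ A) with h | h
      · exact (hAsub h).2 hy.1
      · exact hyZ (Or.inl ⟨hyB, h⟩)
    have hyN : y ∉ (N : Set α) := fun h => hyZ (Or.inr h)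
    have hAne : (A : Set α).Nonempty := by
      obtain ⟨u, hu⟩ := hsne
      exact ⟨u.1, by simp [hA]; exact ⟨u.2, hu⟩⟩
    have hins : M.Indep (insert y (B \ A)) :=
      hyi.subset (insert_subset_insert hWsub)
    obtain ⟨u, huA, hui⟩ := exch_aux hB hBfin (fun x hx => (hAsub hx).1) hAne
      (hT.subset_ground hy.1) hyB hins
    simp only [hA, Finset.coe_image, mem_image] at huA
    obtain ⟨⟨u', hu'⟩, hu's, rfl⟩ := huA
    refine hyN ?_
    simp only [hN, Finset.coe_biUnion, mem_iUnion]
    refine ⟨⟨u', hu'⟩, hu's, ?_⟩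
    simp only [ht, Finset.mem_coe, Finset.mem_filter, hTB, Set.Finite.mem_toFinset]
    exact ⟨⟨hy.1, hyB⟩, hui⟩
  obtain ⟨f, hfinj, hf⟩ := (Finset.all_card_le_biUnion_card_iff_exists_injective t).mp hall
  refine ⟨fun x => if h : x ∈ B \ T then f ⟨x, h⟩ else x, ?_, ?_, ?_⟩
  · intro x hx
    simp only [hx, dif_pos]
    have := hf ⟨x, hx⟩
    simp only [ht, Finset.mem_filter, hTB, Set.Finite.mem_toFinset] at this
    exact this.1
  · intro x hx x' hx' hxx'
    simp only [hx, hx', dif_pos] at hxx'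
    exact Subtype.mk_eq_mk.mp (hfinj hxx')
  · intro u hu
    simp only [hu, dif_pos]
    have := hf ⟨u, hu⟩
    simp only [ht, Finset.mem_filter, hTB, Set.Finite.mem_toFinset] at this
    exact this.2

lemma extend_aux {M : Matroid α} {T : Set α} (hT : M.Indep T) (hTfin : T.Finite) :
    ∀ n (S : Set α), M.Indep S → S.Finite → T.ncard - S.ncard = n →
    S.ncard ≤ T.ncard →
    ∃ B, M.Indep B ∧ S ⊆ B ∧ B ⊆ S ∪ T ∧ B.ncard = T.ncard := by
  intro n
  induction n with
  | zero =>
    intro S hS hSfin hn hle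
    exact ⟨S, hS, subset_rfl, subset_union_left, le_antisymm hle (by omega)⟩
  | succ n ih =>
    intro S hS hSfin hn hle
    have hlt : S.ncard < T.ncard := by omega
    have henc : S.encard < T.encard := by
      rw [← hSfin.cast_ncard_eq, ← hTfin.cast_ncard_eq]
      exact_mod_cast hlt
    obtain ⟨y, hy, hyi⟩ := hS.augment hT henc
    have hSfin' : (insert y S).Finite := hSfin.insert y
    have hcard' : (insert y S).ncard = S.ncard + 1 := Set.ncard_insert_of_notMem hy.2 hSfin
    obtain ⟨B, hB, hSB, hBsub, hBcard⟩ := ih (insert y S) hyi hSfin'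
      (by omega) (by omega)
    refine ⟨B, hB, (subset_insert _ _).trans hSB, ?_, hBcard⟩
    refine hBsub.trans ?_
    exact union_subset (insert_subset (Or.inr hy.1) subset_union_left) subset_union_right

variable {f : α → α} {D X : Set α}

lemma peel_aux (hinj : Set.InjOn f D) :
    ∀ i j (a a' : α), i ≤ j → (∀ m < i, f^[m] a ∈ D) → (∀ m < j, f^[m] a' ∈ D) →
      f^[i] a = f^[j] a' → a = f^[j - i] a' ∧ ∀ m < j - i, f^[m] a' ∈ D := by
  intro i
  induction i with
  | zero =>
    intro j a a' _ _ hD' h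
    simpa using ⟨h, fun m hm => hD' m (by omega)⟩
  | succ i ih =>
    intro j a a' hij hD hD' h
    obtain ⟨j, rfl⟩ : ∃ j', j = j' + 1 := ⟨j - 1, by omega⟩
    rw [Function.iterate_succ_apply', Function.iterate_succ_apply'] at h
    have heq : f^[i] a = f^[j] a' :=
      hinj (hD i (by omega)) (hD' j (by omega)) h
    have := ih j a a' (by omega) (fun m hm => hD m (by omega))
      (fun m hm => hD' m (by omega)) heq
    simpa [Nat.succ_sub_succ] using this

lemma start_eq_aux (hinj : Set.InjOn f D) {a a' : α} (ha : a ∉ f '' D) (ha' : a' ∉ f '' D)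
    {i j : ℕ} (hD : ∀ m < i, f^[m] a ∈ D) (hD' : ∀ m < j, f^[m] a' ∈ D)
    (h : f^[i] a = f^[j] a') : a = a' ∧ i = j := by
  rcases le_total i j with hij | hij
  · obtain ⟨heq, hDm⟩ := peel_aux hinj i j a a' hij hD hD' h
    rcases Nat.eq_zero_or_pos (j - i) with h0 | h0
    · constructor
      · simpa [h0] using heq
      · omega
    · exfalso
      obtain ⟨m, hm⟩ : ∃ m, j - i = m + 1 := ⟨j - i - 1, by omega⟩
      rw [hm, Function.iterate_succ_apply'] at heq
      exact ha ⟨f^[m] a', hDm m (by omega), heq.symm⟩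
  · obtain ⟨heq, hDm⟩ := peel_aux hinj j i a' a hij hD' hD h.symm
    rcases Nat.eq_zero_or_pos (i - j) with h0 | h0
    · constructor
      · simp [h0] at heq; exact heq.symm
      · omega
    · exfalso
      obtain ⟨m, hm⟩ : ∃ m, i - j = m + 1 := ⟨i - j - 1, by omega⟩
      rw [hm, Function.iterate_succ_apply'] at heq
      exact ha' ⟨f^[m] a, hDm m (by omega), heq.symm⟩

lemma orbit_terminate (hinj : Set.InjOn f D) (hmaps : Set.MapsTo f D X)
    (hXfin : X.Finite) {a : α} (haX : a ∈ X) (ha : a ∉ f '' D) :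
    ∃ n, (∀ m < n, f^[m] a ∈ D) ∧ f^[n] a ∉ D := by
  by_contra hc
  push_neg at hc
  have hall : ∀ m, f^[m] a ∈ D := by
    intro m
    induction m using Nat.strong_induction_on with
    | _ m ih => exact hc m ih
  have hinj' : Function.Injective (fun i => f^[i] a) := by
    intro i j h
    exact (start_eq_aux hinj ha ha (fun m _ => hall m) (fun m _ => hall m) h).2
  have hmem : ∀ i, f^[i] a ∈ X := by
    intro i
    cases i with
    | zero => exact haX
    | succ i => rw [Function.iterate_succ_apply']; exact hmaps (hall i)
  exact (Set.infinite_of_injective_forall_mem hinj' hmem) hXfin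

lemma card_odd_range : ∀ n, ((Finset.range n).filter (fun i => i % 2 = 1)).card = n / 2 := by
  intro n
  induction n with
  | zero => simp
  | succ n ih =>
    rw [Finset.range_add_one, Finset.filter_insert]
    by_cases h : n % 2 = 1
    · rw [if_pos h, Finset.card_insert_of_notMem (by simp), ih]; omega
    · rw [if_neg h, ih]; omega

lemma diff_ncard_aux {B T : Set α} (hBfin : B.Finite) (hTfin : T.Finite)
    (h : B.ncard = T.ncard) : (T \ B).ncard = (B \ T).ncard := by
  have h1 : (T ∩ B).ncard + (T \ B).ncard = T.ncard :=
    Set.ncard_inter_add_ncard_diff_eq_ncard T B hTfin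
  have h2 : (B ∩ T).ncard + (B \ T).ncard = B.ncard :=
    Set.ncard_inter_add_ncard_diff_eq_ncard B T hBfin
  rw [inter_comm] at h2
  omega

end Aux

/-- Cunningham's lemma: if the common independent set `S` is not maximum, then
the exchange graph `G(S)` contains an `(s,t)`-path of length at most
`2|S|/(r - |S|) + 2`. -/
theorem exists_short_augmenting_path {α : Type*} (M₁ M₂ : Matroid α)
    (hE : M₂.E = M₁.E) (hfin : M₁.E.Finite)
    (S : Set α) (hS₁ : M₁.Indep S) (hS₂ : M₂.Indep S)
    (r : ℕ) (hr : IsGreatest {n | ∃ T, M₁.Indep T ∧ M₂.Indep T ∧ T.ncard = n} r)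
    (hlt : S.ncard < r) :
    ∃ l : List (ExV α), IsSTPath M₁ M₂ S l ∧
      ((l.length : ℚ) - 1 ≤ 2 * S.ncard / (r - S.ncard) + 2) := by
  classical
  obtain ⟨⟨T, hT₁, hT₂, hTcard⟩, -⟩ := hr
  have hSfin : S.Finite := hfin.subset hS₁.subset_ground
  have hTfin : T.Finite := hfin.subset hT₁.subset_ground
  have hle : S.ncard ≤ T.ncard := by omega
  obtain ⟨B₁, hB₁, hSB₁, hB₁sub, hB₁card⟩ :=
    extend_aux hT₁ hTfin (T.ncard - S.ncard) S hS₁ hSfin rfl hle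
  obtain ⟨B₂, hB₂, hSB₂, hB₂sub, hB₂card⟩ :=
    extend_aux hT₂ hTfin (T.ncard - S.ncard) S hS₂ hSfin rfl hle
  have hB₁fin : B₁.Finite := (hSfin.union hTfin).subset hB₁sub
  have hB₂fin : B₂.Finite := (hSfin.union hTfin).subset hB₂sub
  have he₁ : B₁.encard = T.encard := by
    rw [← hB₁fin.cast_ncard_eq, ← hTfin.cast_ncard_eq, hB₁card]
  have he₂ : B₂.encard = T.encard := by
    rw [← hB₂fin.cast_ncard_eq, ← hTfin.cast_ncard_eq, hB₂card]
  obtain ⟨σ₁, hσ₁maps, hσ₁inj, hσ₁ind⟩ := matching_aux hB₁ hT₁ hB₁fin hTfin he₁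
  obtain ⟨σ₂, hσ₂maps, hσ₂inj, hσ₂ind⟩ := matching_aux hB₂ hT₂ hB₂fin hTfin he₂
  have hB₁T : B₁ \ T = S \ T := by
    apply Subset.antisymm
    · intro x hx
      rcases hB₁sub hx.1 with h | h
      exacts [⟨h, hx.2⟩, absurd h hx.2]
    · intro x hx
      exact ⟨hSB₁ hx.1, hx.2⟩
  have hB₂T : B₂ \ T = S \ T := by
    apply Subset.antisymm
    · intro x hx
      rcases hB₂sub hx.1 with h | h
      exacts [⟨h, hx.2⟩, absurd h hx.2]
    · intro x hx
      exact ⟨hSB₂ hx.1, hx.2⟩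
  rw [hB₁T] at hσ₁maps hσ₁inj hσ₁ind
  rw [hB₂T] at hσ₂maps hσ₂inj hσ₂ind
  -- cardinalities of difference sets
  have hd₁ : (T \ B₁).ncard = (S \ T).ncard := by
    rw [← hB₁T]
    exact diff_ncard_aux hB₁fin hTfin (by omega)
  have hd₂ : (T \ B₂).ncard = (S \ T).ncard := by
    rw [← hB₂T]
    exact diff_ncard_aux hB₂fin hTfin (by omega)
  -- surjectivity of σ₂ onto T \ B₂
  have hTB₂fin : (T \ B₂).Finite := hTfin.diff
  have himg₂ : σ₂ '' (S \ T) = T \ B₂ := by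
    apply Set.eq_of_subset_of_ncard_le (Set.mapsTo_iff_image_subset.mp hσ₂maps) _ hTB₂fin
    rw [Set.ncard_image_of_injOn hσ₂inj, hd₂]
  have hsurj₂ : ∀ y ∈ T \ B₂, ∃ u ∈ S \ T, σ₂ u = y := by
    intro y hy
    rw [← himg₂] at hy
    obtain ⟨u, hu, h⟩ := hy
    exact ⟨u, hu, h⟩
  set g : α → α := fun y => if h : y ∈ T \ B₂ then (hsurj₂ y h).choose else y with hg
  have hginv : ∀ y ∈ T \ B₂, g y ∈ S \ T ∧ σ₂ (g y) = y := by
    intro y hy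
    rw [hg]
    simp only [hy, dif_pos]
    exact ⟨(hsurj₂ y hy).choose_spec.1, (hsurj₂ y hy).choose_spec.2⟩
  set f : α → α := fun x => if x ∈ S then σ₁ x else g x with hf
  set D : Set α := (S \ T) ∪ (T \ B₂) with hD
  set X : Set α := (S \ T) ∪ (T \ S) with hX
  have hTSB₁ : T \ B₁ ⊆ T \ S := fun x hx => ⟨hx.1, fun h => hx.2 (hSB₁ h)⟩
  have hTSB₂ : T \ B₂ ⊆ T \ S := fun x hx => ⟨hx.1, fun h => hx.2 (hSB₂ h)⟩
  have hfS : ∀ x ∈ S \ T, f x ∈ T \ B₁ := by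
    intro x hx
    rw [hf]
    simp only [hx.1, if_pos]
    exact hσ₁maps hx
  have hfT : ∀ x ∈ T \ B₂, f x ∈ S \ T ∧ σ₂ (f x) = x := by
    intro x hx
    have hxS : x ∉ S := fun h => (hTSB₂ hx).2 h
    rw [hf]
    simp only [hxS, if_neg, if_false]
    exact hginv x hx
  have hmaps : Set.MapsTo f D X := by
    rintro x (hx | hx)
    · exact Or.inr (hTSB₁ (hfS x hx))
    · exact Or.inl (hfT x hx).1
  have hinj : Set.InjOn f D := by
    rintro x (hx | hx) x' (hx' | hx') hxx'
    · have h1 : σ₁ x = σ₁ x' := by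
        have e1 := hfS x hx
        have e2 := hfS x' hx'
        rw [hf] at hxx'
        simpa [hx.1, hx'.1] using hxx'
      exact hσ₁inj hx hx' h1
    · exfalso
      have e1 := hfS x hx
      have e2 := hfT x' hx'
      rw [hxx'] at e1
      exact (hTSB₁ e1).2 e2.1.1
    · exfalso
      have e1 := hfT x hx
      have e2 := hfS x' hx'
      rw [hxx'] at e1
      exact (hTSB₁ e2).2 e1.1.1
    · have e1 := hfT x hx
      have e2 := hfT x' hx'
      rw [← e1.2, ← e2.2, hxx']
  have hXfin : X.Finite := (hSfin.diff).union (hTfin.diff)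
  -- starts
  have hstart : ∀ a ∈ B₁ \ S, a ∈ X ∧ a ∉ f '' D := by
    intro a ha
    have haTS : a ∈ T \ S := by
      rcases hB₁sub ha.1 with h | h
      · exact absurd h ha.2
      · exact ⟨h, ha.2⟩
    constructor
    · exact Or.inr haTS
    · rintro ⟨x, hxD, hfx⟩
      rcases hxD with hx | hx
      · have := hfS x hx
        rw [hfx] at this
        exact this.2 ha.1
      · have := (hfT x hx).1
        rw [hfx] at this
        exact haTS.2 this.1
  have hterm : ∀ a ∈ B₁ \ S, ∃ n, (∀ m < n, f^[m] a ∈ D) ∧ f^[n] a ∉ D := by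
    intro a ha
    exact orbit_terminate hinj hmaps hXfin (hstart a ha).1 (hstart a ha).2
  choose! N hN₁ hN₂ using hterm
  -- parity
  have hpar : ∀ a ∈ B₁ \ S, ∀ i, (∀ m < i, f^[m] a ∈ D) →
      (i % 2 = 0 → f^[i] a ∈ T \ S) ∧ (i % 2 = 1 → f^[i] a ∈ S \ T) := by
    intro a ha i
    induction i with
    | zero =>
      intro _
      refine ⟨fun _ => ?_, fun h => by omega⟩
      rcases hB₁sub ha.1 with h | h
      · exact absurd h ha.2
      · exact ⟨h, ha.2⟩
    | succ i ih =>
      intro hDi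
      have hiD : f^[i] a ∈ D := hDi i (by omega)
      have ihh := ih (fun m hm => hDi m (by omega))
      rw [Function.iterate_succ_apply']
      rcases Nat.mod_two_eq_zero_or_one i with h | h
      · have hx : f^[i] a ∈ T \ S := ihh.1 h
        have hxT : f^[i] a ∈ T \ B₂ := by
          rcases hiD with h' | h'
          · exact absurd h'.1 hx.2
          · exact h'
        refine ⟨fun h2 => by omega, fun _ => (hfT _ hxT).1⟩
      · have hx : f^[i] a ∈ S \ T := ihh.2 h
        refine ⟨fun _ => hTSB₁ (hfS _ hx), fun h2 => by omega⟩
  -- stop membership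
  have hstop : ∀ a ∈ B₁ \ S, N a % 2 = 0 ∧ f^[N a] a ∈ (T \ S) ∩ B₂ := by
    intro a ha
    have hnD := hN₂ a ha
    have hpara := hpar a ha (N a) (hN₁ a ha)
    rcases Nat.mod_two_eq_zero_or_one (N a) with h | h
    · have hb : f^[N a] a ∈ T \ S := hpara.1 h
      refine ⟨h, hb, ?_⟩
      by_contra hbB₂
      exact hnD (Or.inr ⟨hb.1, hbB₂⟩)
    · exact absurd (Or.inl (hpara.2 h)) hnD
  -- pigeonhole over the k starts
  set k := r - S.ncard with hk
  have hkpos : 1 ≤ k := by omega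
  have hBSfin : (B₁ \ S).Finite := hB₁fin.diff
  set F1 : Finset α := hBSfin.toFinset with hF1
  have hF1card : F1.card = k := by
    rw [hF1, ← Set.ncard_eq_toFinset_card _ hBSfin, Set.ncard_diff hSB₁ hSfin, hB₁card, hTcard]
  have hSTfin : (S \ T).Finite := hSfin.diff
  set DS : Finset α := hSTfin.toFinset with hDS
  have hDScard : DS.card = (S \ T).ncard := by
    rw [hDS, ← Set.ncard_eq_toFinset_card _ hSTfin]
  set U : α → Finset α :=
    fun a => ((Finset.range (N a + 1)).filter (fun i => i % 2 = 1)).image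
      (fun i => f^[i] a) with hU
  have hUcard : ∀ a ∈ B₁ \ S, (U a).card = (N a + 1) / 2 := by
    intro a ha
    rw [hU]
    rw [Finset.card_image_of_injOn, card_odd_range]
    intro i hi j hj hij
    simp only [Finset.coe_filter, Finset.mem_range, mem_setOf_eq] at hi hj
    exact (start_eq_aux hinj (hstart a ha).2 (hstart a ha).2
      (fun m hm => hN₁ a ha m (by omega)) (fun m hm => hN₁ a ha m (by omega)) hij).2
  have hUsub : ∀ a ∈ B₁ \ S, U a ⊆ DS := by
    intro a ha x hx
    simp only [hU, Finset.mem_image, Finset.mem_filter, Finset.mem_range] at hx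
    obtain ⟨i, ⟨hi, hodd⟩, rfl⟩ := hx
    rw [hDS, Set.Finite.mem_toFinset]
    exact (hpar a ha i (fun m hm => hN₁ a ha m (by omega))).2 hodd
  have hUdisj : ∀ a ∈ F1, ∀ a' ∈ F1, a ≠ a' → Disjoint (U a) (U a') := by
    intro a ha a' ha' hne
    rw [hF1, Set.Finite.mem_toFinset] at ha ha'
    rw [Finset.disjoint_left]
    intro x hx hx'
    simp only [hU, Finset.mem_image, Finset.mem_filter, Finset.mem_range] at hx hx'
    obtain ⟨i, ⟨hi, _⟩, hxe⟩ := hx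
    obtain ⟨j, ⟨hj, _⟩, hx'e⟩ := hx'
    exact hne (start_eq_aux hinj (hstart a ha).2 (hstart a' ha').2
      (fun m hm => hN₁ a ha m (by omega)) (fun m hm => hN₁ a' ha' m (by omega))
      (hxe.trans hx'e.symm)).1
  have hsum : ∑ a ∈ F1, (U a).card ≤ DS.card := by
    rw [← Finset.card_biUnion hUdisj]
    apply Finset.card_le_card
    intro x hx
    rw [Finset.mem_biUnion] at hx
    obtain ⟨a, ha, hx⟩ := hx
    exact hUsub a (by rwa [hF1, Set.Finite.mem_toFinset] at ha) hx
  have hpick : ∃ a ∈ F1, k * (U a).card ≤ (S \ T).ncard := by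
    by_contra hc
    push_neg at hc
    have hge : ∀ a ∈ F1, (S \ T).ncard + 1 ≤ k * (U a).card := fun a ha => hc a ha
    have h1 : F1.card * ((S \ T).ncard + 1) ≤ ∑ a ∈ F1, k * (U a).card := by
      simpa [smul_eq_mul, mul_comm] using Finset.card_nsmul_le_sum F1 _ _ hge
    rw [← Finset.mul_sum, hF1card] at h1
    have h2 : k * (∑ a ∈ F1, (U a).card) ≤ k * (S \ T).ncard :=
      Nat.mul_le_mul_left k (le_trans hsum (le_of_eq hDScard))
    have h3 : ((S \ T).ncard + 1) ≤ (S \ T).ncard :=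
      Nat.le_of_mul_le_mul_left (le_trans h1 h2) (by omega)
    omega
  obtain ⟨a, haF, hka⟩ := hpick
  have ha : a ∈ B₁ \ S := by rwa [hF1, Set.Finite.mem_toFinset] at haF
  set n := N a with hn
  have hstopa := hstop a ha
  set m := n / 2 with hm
  have hn2m : n = 2 * m := by omega
  have hUam : (U a).card = m := by rw [hUcard a ha]; omega
  -- the path
  set l0 : List (ExV α) := (List.range (n + 1)).map (fun i => Sum.inl (f^[i] a)) with hl0
  have hhead : l0.head? = some (Sum.inl a) := by
    rw [hl0, List.range_succ_eq_map]
    simp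
  have hl0last : (Sum.inr false :: l0).getLast? = some (Sum.inl (f^[n] a)) := by
    rw [hl0, List.range_succ, List.map_append, List.map_cons, List.map_nil,
      ← List.cons_append, List.getLast?_concat]
  refine ⟨Sum.inr false :: (l0 ++ [Sum.inr true]), ⟨?_, rfl, ?_⟩, ?_⟩
  · rw [show Sum.inr false :: (l0 ++ [Sum.inr true])
        = (Sum.inr false :: l0) ++ [Sum.inr true] from rfl]
    simp only [List.Chain']
    rw [List.isChain_append]
    refine ⟨?_, List.isChain_singleton _, ?_⟩
    · rw [List.isChain_cons]
      constructor
      · intro y hy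
        rw [hhead] at hy
        simp only [Option.mem_def, Option.some_inj] at hy
        subst hy
        exact ⟨ha.2, hB₁.subset (insert_subset ha.1 hSB₁)⟩
      · rw [hl0, List.isChain_map, List.isChain_range_succ]
        intro i hi
        have hiD : f^[i] a ∈ D := hN₁ a ha i hi
        rw [Function.iterate_succ_apply']
        rcases hiD with hx | hx
        · have hfx := hfS _ hx
          have hfeq : f (f^[i] a) = σ₁ (f^[i] a) := by
            exact if_pos hx.1
          refine Or.inl ⟨hx.1, ?_, ?_⟩
          · rw [hfeq] at hfx ⊢
            exact fun h => (hTSB₁ (hσ₁maps hx)).2 h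
          · rw [hfeq]
            exact (hσ₁ind _ hx).subset
              (insert_subset_insert (diff_subset_diff_left hSB₁))
        · have hfx := hfT _ hx
          refine Or.inr ⟨(hTSB₂ hx).2, hfx.1.1, ?_⟩
          have hind := hσ₂ind _ hfx.1
          rw [hfx.2] at hind
          exact hind.subset (insert_subset_insert (diff_subset_diff_left hSB₂))
    · intro x hxl y hyl
      rw [hl0last] at hxl
      simp only [Option.mem_def, Option.some_inj] at hxl hyl
      subst hxl
      have hyl' : y = Sum.inr true := by simpa using hyl.symm
      subst hyl'
      exact ⟨hstopa.2.1.2, hB₂.subset (insert_subset hstopa.2.2 hSB₂)⟩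
  · rw [← List.cons_append, List.getLast?_concat]
  · have hlen : (Sum.inr false :: (l0 ++ [Sum.inr true])).length = n + 3 := by
      simp [hl0]
    rw [hlen]
    have hdle : (S \ T).ncard ≤ S.ncard := Set.ncard_le_ncard diff_subset hSfin
    have hkm : k * m ≤ S.ncard := by
      calc k * m = k * (U a).card := by rw [hUam]
        _ ≤ (S \ T).ncard := hka
        _ ≤ S.ncard := hdle
    have hrq : ((r : ℚ) - (S.ncard : ℚ)) = (k : ℚ) := by
      rw [hk, Nat.cast_sub hlt.le]
    rw [hrq]
    have hkq : (0:ℚ) < (k : ℚ) := by exact_mod_cast hkpos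
    have h2 : (m : ℚ) * k ≤ (S.ncard : ℚ) := by
      rw [mul_comm]
      exact_mod_cast hkm
    have h3 : (m:ℚ) ≤ (S.ncard : ℚ) / k := (le_div_iff₀ hkq).mpr h2
    have h4 : 2 * (S.ncard:ℚ) / k = 2 * ((S.ncard:ℚ)/k) := by ring
    rw [hn2m]
    push_cast
    rw [h4]
    linarith
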